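/- There exists a bijective additive function a : ℝ → ℝ such that the additive function λ ↦ a(λ) - λ/n is neither injective nor surjective (for a fixed integer n ≥ 2). Consequently, the multiplicative function g(μ) = μ^(-1/n)·exp(a(log μ)) on (0,∞) with λ ↦ g(λ)ⁿλ an automorphism of (0,∞) need not be a bijection of (0,∞). -/

import Mathlib

open Real

/-- Auxiliary construction: a bijective ℚ-linear map `a : ℝ → ℝ` such that
`x ↦ a x - x / n` is neither injective nor surjective. -/
lemma stmt_8_aux (n : ℕ) (hn : 2 ≤ n) :
    ∃ a : ℝ →ₗ[ℚ] ℝ, Function.Bijective a ∧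
      ¬ Function.Injective (fun x : ℝ => a x - x / n) ∧
      ¬ Function.Surjective (fun x : ℝ => a x - x / n) := by
  classical
  have hn0 : (n : ℚ) ≠ 0 := by positivity
  set b := Module.Basis.ofVectorSpace ℚ ℝ with hb
  obtain ⟨i0⟩ := b.index_nonempty
  set c : (Module.Basis.ofVectorSpaceIndex ℚ ℝ) → ℚ := fun i => if i = i0 then (n : ℚ)⁻¹ else 1
    with hc
  have hcne : ∀ i, c i ≠ 0 := by
    intro i
    by_cases h : i = i0 <;> simp [hc, h, hn0]
  set a : ℝ →ₗ[ℚ] ℝ := b.constr ℚ (fun i => c i • b i) with ha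
  set a' : ℝ →ₗ[ℚ] ℝ := b.constr ℚ (fun i => (c i)⁻¹ • b i) with ha'
  have haa' : ∀ x, a' (a x) = x := by
    have : a'.comp a = LinearMap.id := by
      apply b.ext
      intro i
      simp [ha, ha', smul_smul, inv_mul_cancel₀ (hcne i), mul_inv_cancel₀ (hcne i)]
    intro x
    exact DFunLike.congr_fun this x
  have ha'a : ∀ x, a (a' x) = x := by
    have : a.comp a' = LinearMap.id := by
      apply b.ext
      intro i
      simp [ha, ha', smul_smul, inv_mul_cancel₀ (hcne i), mul_inv_cancel₀ (hcne i)]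
    intro x
    exact DFunLike.congr_fun this x
  have hbij : Function.Bijective a :=
    Function.bijective_iff_has_inverse.2 ⟨a', haa', ha'a⟩
  have hdiv : ∀ x : ℝ, x / (n : ℝ) = ((n : ℚ)⁻¹ : ℚ) • x := by
    intro x
    rw [Rat.smul_def]
    push_cast
    ring
  have hcoord : ∀ x : ℝ, b.coord i0 (a x) = (n : ℚ)⁻¹ * b.coord i0 x := by
    have : (b.coord i0).comp a = (n : ℚ)⁻¹ • b.coord i0 := by
      apply b.ext
      intro i
      by_cases h : i = i0 <;>
        simp [ha, hc, h, Module.Basis.coord_apply, Module.Basis.repr_self, Finsupp.single_apply]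
    intro x
    simpa using DFunLike.congr_fun this x
  have hker : a (b i0) - (b i0) / n = 0 := by
    rw [hdiv]
    simp [ha, hc, smul_smul]
  refine ⟨a, hbij, ?_, ?_⟩
  · intro hinj
    have h0 : (fun x : ℝ => a x - x / n) (b i0) = (fun x : ℝ => a x - x / n) 0 := by
      simp [hker]
    have := hinj h0
    exact b.ne_zero i0 this
  · intro hsurj
    obtain ⟨x, hx⟩ := hsurj (b i0)
    have hx' : a x - x / n = b i0 := hx
    have : b.coord i0 (a x - x / n) = b.coord i0 (b i0) := by rw [hx']
    rw [map_sub, hcoord, hdiv, map_smul] at this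
    simp [Module.Basis.coord_apply, Module.Basis.repr_self, smul_eq_mul] at this

theorem stmt_8 (n : ℕ) (hn : 2 ≤ n) :
    ∃ a : ℝ → ℝ, Function.Bijective a ∧ (∀ x y : ℝ, a (x + y) = a x + a y) ∧
      ¬ Function.Injective (fun lam : ℝ => a lam - lam / n) ∧
      ¬ Function.Surjective (fun lam : ℝ => a lam - lam / n) ∧
      (Set.BijOn (fun lam : ℝ =>
          ((lam ^ (-(1 : ℝ) / n) * Real.exp (a (Real.log lam))) ^ n * lam))
          (Set.Ioi (0 : ℝ)) (Set.Ioi (0 : ℝ))) ∧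
      ¬ Set.BijOn (fun μ : ℝ => μ ^ (-(1 : ℝ) / n) * Real.exp (a (Real.log μ)))
          (Set.Ioi (0 : ℝ)) (Set.Ioi (0 : ℝ)) := by
  obtain ⟨a, hbij, hni, hns⟩ := stmt_8_aux n hn
  have hnR : (n : ℝ) ≠ 0 := by positivity
  have hsimp : ∀ lam : ℝ, 0 < lam →
      ((lam ^ (-(1 : ℝ) / n) * Real.exp (a (Real.log lam))) ^ n * lam)
        = Real.exp (n * a (Real.log lam)) := by
    intro lam hlam
    have h1 : (lam ^ (-(1 : ℝ) / n)) ^ n = lam⁻¹ := by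
      rw [← Real.rpow_natCast (lam ^ (-(1 : ℝ) / n)) n, ← Real.rpow_mul hlam.le]
      rw [div_mul_cancel₀ _ hnR, Real.rpow_neg_one]
    rw [mul_pow, h1, ← Real.exp_nat_mul]
    field_simp
  refine ⟨a, hbij, fun x y => map_add a x y, hni, hns, ?_, ?_⟩
  · constructor
    · intro lam hlam
      rw [Set.mem_Ioi] at hlam
      simp only [Set.mem_Ioi]
      show (0:ℝ) < (lam ^ (-(1 : ℝ) / n) * Real.exp (a (Real.log lam))) ^ n * lam
      rw [hsimp lam hlam]
      exact Real.exp_pos _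
    constructor
    · intro x hx y hy hxy
      rw [Set.mem_Ioi] at hx hy
      have hxy' : Real.exp (n * a (Real.log x)) = Real.exp (n * a (Real.log y)) := by
        rw [← hsimp x hx, ← hsimp y hy]; exact hxy
      replace hxy := hxy'
      have h2 : (n : ℝ) * a (Real.log x) = (n : ℝ) * a (Real.log y) :=
        Real.exp_injective hxy
      have h3 : a (Real.log x) = a (Real.log y) := mul_left_cancel₀ hnR h2
      have h4 : Real.log x = Real.log y := hbij.1 h3
      exact Real.log_injOn_pos (Set.mem_Ioi.2 hx) (Set.mem_Ioi.2 hy) h4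
    · intro z hz
      rw [Set.mem_Ioi] at hz
      obtain ⟨x, hx⟩ := hbij.2 (Real.log z / n)
      refine ⟨Real.exp x, Set.mem_Ioi.2 (Real.exp_pos x), ?_⟩
      show ((Real.exp x ^ (-(1 : ℝ) / n) * Real.exp (a (Real.log (Real.exp x)))) ^ n
          * Real.exp x) = z
      rw [hsimp _ (Real.exp_pos x), Real.log_exp, hx, mul_div_cancel₀ _ hnR,
        Real.exp_log hz]
  · intro H
    apply hns
    intro y'
    obtain ⟨μ, hμ, hμy⟩ := H.2.2 (Set.mem_Ioi.2 (Real.exp_pos y'))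
    rw [Set.mem_Ioi] at hμ
    have h6 : μ ^ (-(1 : ℝ) / n) * Real.exp (a (Real.log μ)) = Real.exp y' := hμy
    rw [Real.rpow_def_of_pos hμ, ← Real.exp_add] at h6
    have h5 : Real.log μ * (-(1 : ℝ) / n) + a (Real.log μ) = y' :=
      Real.exp_injective h6
    refine ⟨Real.log μ, ?_⟩
    show a (Real.log μ) - Real.log μ / n = y'
    rw [← h5]; ring
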